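/- Let (A,B) be a pair of d×d complex matrices with equal diagonals such that A has nonnegative entries, B is hermitian diagonally dominant, and A_{ij}A_{ji} ≥ |B_{ij}|² for all i,j. Then (A,B) is pairwise completely positive with factor width 2: there exist vectors v_n, w_n ∈ ℂ^d with v_n ⊙ w_n having at most 2 nonzero coordinates, such that A = Σ_n |v_n⊙ v̄_n⟩⟨w_n⊙ w̄_n| and B = Σ_n |v_n⊙ w_n⟩⟨v_n⊙ w_n|. -/

import Mathlib

open Matrix Finset
open scoped ComplexOrder

namespace PCPFW2

variable {d : ℕ}
variable (A B : Matrix (Fin d) (Fin d) ℂ)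

noncomputable def mm (B : Matrix (Fin d) (Fin d) ℂ) (i j : Fin d) : ℝ := ‖B i j‖
noncomputable def aa (A : Matrix (Fin d) (Fin d) ℂ) (i j : Fin d) : ℝ := (A i j).re
noncomputable def dl (B : Matrix (Fin d) (Fin d) ℂ) (i : Fin d) : ℝ :=
  (B i i).re - ∑ j ∈ univ.erase i, mm B i j
noncomputable def rr (A B : Matrix (Fin d) (Fin d) ℂ) (i j : Fin d) : ℝ :=
  if mm B i j = 0 then aa A i j else aa A i j / 2 - (mm B i j)^2 / (2 * aa A j i)

noncomputable def V (A B : Matrix (Fin d) (Fin d) ℂ) (p : Fin d × Fin d × Bool) (k : Fin d) : ℂ :=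
  if p.2.2 then (if p.1 ≠ p.2.1 ∧ k = p.1 then (Real.sqrt (rr A B p.1 p.2.1) : ℂ) else 0)
  else if p.1 = p.2.1 then (if k = p.1 then (Real.sqrt (dl B p.1) : ℂ) else 0)
  else if k = p.1 then B p.1 p.2.1 / (Real.sqrt (2 * mm B p.1 p.2.1) : ℂ)
  else if k = p.2.1 then ((mm B p.1 p.2.1 / Real.sqrt (2 * aa A p.1 p.2.1) : ℝ) : ℂ)
  else 0

noncomputable def W (A B : Matrix (Fin d) (Fin d) ℂ) (p : Fin d × Fin d × Bool) (k : Fin d) : ℂ :=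
  if p.2.2 then (if p.1 ≠ p.2.1 ∧ k = p.2.1 then 1 else 0)
  else if p.1 = p.2.1 then (if k = p.1 then 1 else 0)
  else if k = p.1 then 1
  else if k = p.2.1 then ((Real.sqrt (aa A p.1 p.2.1 / mm B p.1 p.2.1) : ℝ) : ℂ)
  else 0

noncomputable def nv (A B : Matrix (Fin d) (Fin d) ℂ) (p : Fin d × Fin d × Bool) (k : Fin d) : ℝ :=
  if p.2.2 then (if p.1 ≠ p.2.1 ∧ k = p.1 then rr A B p.1 p.2.1 else 0)
  else if p.1 = p.2.1 then (if k = p.1 then dl B p.1 else 0)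
  else if k = p.1 then mm B p.1 p.2.1 / 2
  else if k = p.2.1 then (mm B p.1 p.2.1)^2 / (2 * aa A p.1 p.2.1)
  else 0

noncomputable def nw (A B : Matrix (Fin d) (Fin d) ℂ) (p : Fin d × Fin d × Bool) (k : Fin d) : ℝ :=
  if p.2.2 then (if p.1 ≠ p.2.1 ∧ k = p.2.1 then 1 else 0)
  else if p.1 = p.2.1 then (if k = p.1 then 1 else 0)
  else if k = p.1 then 1
  else if k = p.2.1 then aa A p.1 p.2.1 / mm B p.1 p.2.1
  else 0

noncomputable def xx (A B : Matrix (Fin d) (Fin d) ℂ) (p : Fin d × Fin d × Bool) (k : Fin d) : ℂ :=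
  if p.2.2 then 0
  else if p.1 = p.2.1 then (if k = p.1 then (Real.sqrt (dl B p.1) : ℂ) else 0)
  else if k = p.1 then B p.1 p.2.1 / (Real.sqrt (2 * mm B p.1 p.2.1) : ℂ)
  else if k = p.2.1 then (Real.sqrt (mm B p.1 p.2.1 / 2) : ℂ)
  else 0

lemma mm_nonneg (i j : Fin d) : 0 ≤ mm B i j := norm_nonneg _

lemma mm_symm (hherm : B.IsHermitian) (i j : Fin d) : mm B i j = mm B j i := by
  unfold mm; rw [← hherm.apply j i]; simp [Complex.norm_conj]

lemma B_eq_zero_of_mm {i j : Fin d} (h : mm B i j = 0) : B i j = 0 := by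
  simpa [mm] using h

lemma aa_pos_of_mm_ne (hin : ∀ i j, ‖B i j‖ ^ 2 ≤ (A i j).re * (A j i).re)
    (h0a : ∀ i j, 0 ≤ (A i j).re) {i j : Fin d} (h : mm B i j ≠ 0) :
    0 < aa A i j ∧ 0 < aa A j i := by
  have hm : 0 < mm B i j ^ 2 := by positivity
  have := hin i j
  constructor
  · rcases lt_or_eq_of_le (h0a i j) with h' | h'
    · exact h'
    · exfalso; simp only [mm, aa] at *; nlinarith [h0a j i]
  · rcases lt_or_eq_of_le (h0a j i) with h' | h'
    · exact h'
    · exfalso; simp only [mm, aa] at *; nlinarith [h0a i j]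

lemma dl_nonneg (hdd : ∀ i, ∑ j ∈ univ.filter (· ≠ i), ‖B i j‖ ≤ (B i i).re)
    (i : Fin d) : 0 ≤ dl B i := by
  have := hdd i
  rw [Finset.filter_ne'] at this
  simpa [dl, mm] using this

lemma rr_nonneg (hin : ∀ i j, ‖B i j‖ ^ 2 ≤ (A i j).re * (A j i).re)
    (h0a : ∀ i j, 0 ≤ (A i j).re) (i j : Fin d) : 0 ≤ rr A B i j := by
  unfold rr
  split_ifs with h
  · exact h0a i j
  · obtain ⟨h1, h2⟩ := aa_pos_of_mm_ne A B hin h0a h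
    have h3 : mm B i j ^ 2 ≤ aa A i j * aa A j i := hin i j
    rw [sub_nonneg, div_le_div_iff₀ (by positivity) (by norm_num : (0:ℝ) < 2)]
    nlinarith


lemma key1 (i j : Fin d) :
    (B i j / (Real.sqrt (2 * mm B i j) : ℂ)) * star (B i j / (Real.sqrt (2 * mm B i j) : ℂ))
      = ((mm B i j / 2 : ℝ) : ℂ) := by
  by_cases hm : mm B i j = 0
  · rw [B_eq_zero_of_mm B hm]; simp [hm]
  · have h2m : (0:ℝ) ≤ 2 * mm B i j := by
      have := mm_nonneg B i j; linarith
    rw [Complex.star_def, map_div₀, Complex.conj_ofReal, div_mul_div_comm, Complex.mul_conj,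
      ← Complex.ofReal_mul, Real.mul_self_sqrt h2m]
    rw [show Complex.normSq (B i j) = mm B i j ^ 2 by rw [← Complex.sq_norm]; rfl]
    rw [← Complex.ofReal_div]
    congr 1
    field_simp

lemma key2 (h0a : ∀ i j, 0 ≤ (A i j).re) (i j : Fin d) :
    ((mm B i j / Real.sqrt (2 * aa A i j) : ℝ) : ℂ)
      * star ((mm B i j / Real.sqrt (2 * aa A i j) : ℝ) : ℂ)
      = (((mm B i j)^2 / (2 * aa A i j) : ℝ) : ℂ) := by
  have haa : (0:ℝ) ≤ aa A i j := h0a i j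
  rw [Complex.star_def, Complex.conj_ofReal, ← Complex.ofReal_mul]
  congr 1
  rw [div_mul_div_comm, Real.mul_self_sqrt (by linarith : (0:ℝ) ≤ 2 * aa A i j)]
  ring

lemma key3 (hin : ∀ i j, ‖B i j‖ ^ 2 ≤ (A i j).re * (A j i).re)
    (h0a : ∀ i j, 0 ≤ (A i j).re) (i j : Fin d) :
    mm B i j / Real.sqrt (2 * aa A i j) * Real.sqrt (aa A i j / mm B i j)
      = Real.sqrt (mm B i j / 2) := by
  by_cases hm : mm B i j = 0
  · simp [hm]
  · have ha : 0 < aa A i j := (aa_pos_of_mm_ne A B hin h0a hm).1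
    have hm' : 0 < mm B i j := lt_of_le_of_ne (mm_nonneg B i j) (Ne.symm hm)
    rw [show (2 : ℝ) * aa A i j = aa A i j * 2 by ring, Real.sqrt_mul ha.le,
      Real.sqrt_div ha.le, Real.sqrt_div hm'.le]
    have h2 : Real.sqrt 2 ≠ 0 := by positivity
    have hsa : Real.sqrt (aa A i j) ≠ 0 := Real.sqrt_ne_zero'.mpr ha
    have hsm : Real.sqrt (mm B i j) ≠ 0 := Real.sqrt_ne_zero'.mpr hm'
    have hmm : Real.sqrt (mm B i j) * Real.sqrt (mm B i j) = mm B i j :=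
      Real.mul_self_sqrt hm'.le
    field_simp
    linear_combination (-1 : ℝ) * hmm

lemma hsqc : ∀ (x : ℝ), 0 ≤ x → ((Real.sqrt x : ℝ) : ℂ) * star ((Real.sqrt x : ℝ) : ℂ) = (x : ℂ) := by
  intro x hx
  rw [Complex.star_def, Complex.conj_ofReal, ← Complex.ofReal_mul, Real.mul_self_sqrt hx]

lemma V_mul_star (hin : ∀ i j, ‖B i j‖ ^ 2 ≤ (A i j).re * (A j i).re)
    (h0a : ∀ i j, 0 ≤ (A i j).re)
    (hdd : ∀ i, ∑ j ∈ univ.filter (· ≠ i), ‖B i j‖ ≤ (B i i).re)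
    (p : Fin d × Fin d × Bool) (k : Fin d) :
    V A B p k * star (V A B p k) = ((nv A B p k : ℝ) : ℂ) := by
  obtain ⟨i, j, t⟩ := p
  simp only [V, nv]
  split_ifs with h1 h2 h3 h4 h5 h6
  · exact hsqc _ (rr_nonneg A B hin h0a i j)
  · simp
  · exact hsqc _ (dl_nonneg B hdd i)
  · simp
  · exact key1 B i j
  · exact key2 A B h0a i j
  · simp

lemma W_mul_star (h0a : ∀ i j, 0 ≤ (A i j).re)
    (p : Fin d × Fin d × Bool) (k : Fin d) :
    W A B p k * star (W A B p k) = ((nw A B p k : ℝ) : ℂ) := by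
  obtain ⟨i, j, t⟩ := p
  simp only [W, nw]
  split_ifs with h1 h2 h3 h4 h5 h6
  · simp
  · simp
  · simp
  · simp
  · simp
  · exact hsqc _ (div_nonneg (h0a i j) (mm_nonneg B i j))
  · simp

lemma VW_eq_xx (hin : ∀ i j, ‖B i j‖ ^ 2 ≤ (A i j).re * (A j i).re)
    (h0a : ∀ i j, 0 ≤ (A i j).re)
    (p : Fin d × Fin d × Bool) (k : Fin d) :
    V A B p k * W A B p k = xx A B p k := by
  obtain ⟨i, j, t⟩ := p
  cases t
  · simp only [V, W, xx]
    by_cases hij : i = j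
    · subst hij; by_cases hk : k = i <;> simp [hk]
    · by_cases hk : k = i
      · simp [hij, hk]
      · by_cases hk2 : k = j
        · simp only [Bool.false_eq_true, if_false, if_neg hij, if_neg hk, if_pos hk2]
          rw [← Complex.ofReal_mul, key3 A B hin h0a i j]
        · simp [hij, hk, hk2]
  · simp only [V, W, xx]
    by_cases h1 : i ≠ j ∧ k = i
    · have h2 : ¬(i ≠ j ∧ k = j) := fun h2 => h1.1 (h1.2.symm.trans h2.2)
      simp [h1, h2]
    · simp [h1]

lemma sum_sum_one {M : Type*} [AddCommMonoid M] (f : Fin d → Fin d → M) (k l : Fin d)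
    (h : ∀ i j, i = k → j = l → False → True)
    (h0 : ∀ i j, ¬(i = k ∧ j = l) → f i j = 0) :
    ∑ i, ∑ j, f i j = f k l := by
  rw [Finset.sum_eq_single_of_mem k (mem_univ k)]
  · exact Finset.sum_eq_single_of_mem l (mem_univ l)
      (fun j _ hj => h0 k j (fun hc => hj hc.2))
  · intro i _ hi
    exact Finset.sum_eq_zero fun j _ => h0 i j (fun hc => hi hc.1)

lemma sum_sum_two {M : Type*} [AddCommMonoid M] (f : Fin d → Fin d → M) (k l : Fin d)
    (hkl : k ≠ l)
    (h0 : ∀ i j, ¬(i = k ∧ j = l) → ¬(i = l ∧ j = k) → f i j = 0) :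
    ∑ i, ∑ j, f i j = f k l + f l k := by
  have hrow : ∀ i, i ≠ k → i ≠ l → ∑ j, f i j = 0 := fun i hik hil =>
    Finset.sum_eq_zero fun j _ => h0 i j (fun hc => hik hc.1) (fun hc => hil hc.1)
  have hsub : ∑ i, ∑ j, f i j = ∑ i ∈ ({k, l} : Finset (Fin d)), ∑ j, f i j := by
    refine (Finset.sum_subset (Finset.subset_univ _) ?_).symm
    intro i _ hi
    simp only [Finset.mem_insert, Finset.mem_singleton] at hi
    push_neg at hi
    exact hrow i hi.1 hi.2
  rw [hsub, Finset.sum_pair hkl,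
    Finset.sum_eq_single_of_mem l (mem_univ l)
      (fun j _ hj => h0 k j (fun hc => hj hc.2) (fun hc => hkl hc.1)),
    Finset.sum_eq_single_of_mem k (mem_univ k)
      (fun j _ hj => h0 l j (fun hc => hkl hc.1.symm) (fun hc => hj hc.2))]

lemma sum_sum_diag {M : Type*} [AddCommMonoid M] (f : Fin d → Fin d → M) (k : Fin d)
    (h0 : ∀ i j, i ≠ k → j ≠ k → f i j = 0) :
    ∑ i, ∑ j, f i j = (f k k + ∑ j ∈ univ.erase k, f k j) + ∑ i ∈ univ.erase k, f i k := by
  rw [← Finset.add_sum_erase univ (fun i => ∑ j, f i j) (mem_univ k)]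
  congr 1
  · rw [← Finset.add_sum_erase univ (fun j => f k j) (mem_univ k)]
  · refine Finset.sum_congr rfl fun i hi => ?_
    exact Finset.sum_eq_single_of_mem k (mem_univ k)
      (fun j _ hj => h0 i j (Finset.ne_of_mem_erase hi) hj)

lemma f2 (hin : ∀ i j, ‖B i j‖ ^ 2 ≤ (A i j).re * (A j i).re)
    (h0a : ∀ i j, 0 ≤ (A i j).re) (i k : Fin d) :
    (mm B i k)^2 / (2 * aa A i k) * (aa A i k / mm B i k) = mm B i k / 2 := by
  by_cases hm : mm B i k = 0
  · simp [hm]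
  · have ha : 0 < aa A i k := (aa_pos_of_mm_ne A B hin h0a hm).1
    field_simp

lemma sumA (hin : ∀ i j, ‖B i j‖ ^ 2 ≤ (A i j).re * (A j i).re)
    (h0a : ∀ i j, 0 ≤ (A i j).re) (hherm : B.IsHermitian)
    (hBkk : ∀ k, aa A k k = (B k k).re) (k l : Fin d) :
    ∑ p : Fin d × Fin d × Bool, nv A B p k * nw A B p l = aa A k l := by
  simp only [Fintype.sum_prod_type, Fintype.sum_bool, Finset.sum_add_distrib]
  by_cases hkl : k = l
  · subst hkl
    have hT : ∑ i, ∑ j, nv A B (i,j,true) k * nw A B (i,j,true) k = 0 := by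
      refine Finset.sum_eq_zero fun i _ => Finset.sum_eq_zero fun j _ => ?_
      by_cases h1 : i ≠ j ∧ k = i
      · have h2 : ¬(i ≠ j ∧ k = j) := fun h2 => h1.1 (h1.2.symm.trans h2.2)
        simp [nv, nw, h1, h2]
      · simp [nv, nw, h1]
    have hF : ∑ i, ∑ j, nv A B (i,j,false) k * nw A B (i,j,false) k = aa A k k := by
      rw [sum_sum_diag (fun i j => nv A B (i,j,false) k * nw A B (i,j,false) k) k ?h0]
      case h0 =>
        intro i j hi hj
        by_cases hij : i = j
        · subst hij
          simp [nv, nw, Ne.symm hi]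
        · simp [nv, nw, hij, Ne.symm hi, Ne.symm hj]
      have e1 : nv A B (k,k,false) k * nw A B (k,k,false) k = dl B k := by
        simp [nv, nw]
      have e2 : ∀ j ∈ univ.erase k,
          nv A B (k,j,false) k * nw A B (k,j,false) k = mm B k j / 2 := by
        intro j hj
        have hjk : ¬k = j := fun h => (Finset.ne_of_mem_erase hj) h.symm
        simp [nv, nw, hjk]
      have e3 : ∀ i ∈ univ.erase k,
          nv A B (i,k,false) k * nw A B (i,k,false) k = mm B k i / 2 := by
        intro i hi
        have hik : ¬k = i := fun h => (Finset.ne_of_mem_erase hi) h.symm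
        have : nv A B (i,k,false) k * nw A B (i,k,false) k
            = (mm B i k)^2 / (2 * aa A i k) * (aa A i k / mm B i k) := by
          have hik2 : ¬ i = k := fun h => hik h.symm
          simp [nv, nw, hik, hik2]
        rw [this, f2 A B hin h0a i k, mm_symm B hherm i k]
      rw [e1, Finset.sum_congr rfl e2, Finset.sum_congr rfl e3]
      have hcomb : ∑ j ∈ univ.erase k, mm B k j / 2 + ∑ j ∈ univ.erase k, mm B k j / 2
          = ∑ j ∈ univ.erase k, mm B k j := by
        rw [← Finset.sum_add_distrib]
        exact Finset.sum_congr rfl fun _ _ => by ring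
      have hdl : dl B k = (B k k).re - ∑ j ∈ univ.erase k, mm B k j := rfl
      rw [hBkk k]
      rw [add_assoc, hcomb, hdl]
      ring
    rw [hT, hF, zero_add]
  · have hT : ∑ i, ∑ j, nv A B (i,j,true) k * nw A B (i,j,true) l = rr A B k l := by
      rw [sum_sum_one (fun i j => nv A B (i,j,true) k * nw A B (i,j,true) l) k l
        (fun _ _ _ _ _ => trivial) ?h0]
      case h0 =>
        intro i j hij
        rw [not_and_or] at hij
        rcases hij with hi | hj
        · have : ¬(i ≠ j ∧ k = i) := fun h => hi h.2.symm
          simp [nv, this]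
        · have : ¬(i ≠ j ∧ l = j) := fun h => hj h.2.symm
          simp [nw, this]
      simp [nv, nw, hkl]
    have hF : ∑ i, ∑ j, nv A B (i,j,false) k * nw A B (i,j,false) l
        = mm B k l / 2 * (aa A k l / mm B k l) + (mm B l k)^2 / (2 * aa A l k) := by
      rw [sum_sum_two (fun i j => nv A B (i,j,false) k * nw A B (i,j,false) l) k l hkl ?h0]
      case h0 =>
        intro i j h1 h2
        by_cases hij : i = j
        · subst hij
          by_cases hk : k = i
          · subst hk
            have hlk : ¬ l = k := fun h => hkl h.symm
            simp [nv, nw, hkl, hlk]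
          · simp [nv, nw, hk]
        · -- need one of the factors to vanish
          by_cases hki : k = i
          · -- then need l ≠ j (else (i,j) = (k,l))
            have hlj : ¬ l = j := fun h => h1 ⟨hki.symm, h.symm⟩
            have hli : ¬ l = i := fun h => hkl (hki.trans h.symm)
            simp [nv, nw, hij, hlj, hli]
          · by_cases hkj : k = j
            · have hli : ¬ l = i := fun h => h2 ⟨h.symm, hkj.symm⟩
              have hlj : ¬ l = j := fun h => hkl (hkj.trans h.symm)
              simp [nv, nw, hij, hli, hlj]
            · simp [nv, nw, hij, hki, hkj]
      have g1 : nv A B (k,l,false) k * nw A B (k,l,false) l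
          = mm B k l / 2 * (aa A k l / mm B k l) := by
        have hlk : ¬ l = k := fun h => hkl h.symm
        simp [nv, nw, hkl, hlk]
      have g2 : nv A B (l,k,false) k * nw A B (l,k,false) l
          = (mm B l k)^2 / (2 * aa A l k) := by
        have hlk : ¬ l = k := fun h => hkl h.symm
        simp [nv, nw, hlk, hkl]
      rw [g1, g2]
    rw [hT, hF, mm_symm B hherm l k]
    by_cases hm : mm B k l = 0
    · simp [rr, hm]
    · have h1 : mm B k l / 2 * (aa A k l / mm B k l) = aa A k l / 2 := by
        field_simp
      rw [rr, if_neg hm, h1]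
      ring

lemma key4 (i j : Fin d) :
    B i j / ((Real.sqrt (2 * mm B i j) : ℝ) : ℂ) * ((Real.sqrt (mm B i j / 2) : ℝ) : ℂ)
      = B i j / 2 := by
  by_cases hm : mm B i j = 0
  · rw [B_eq_zero_of_mm B hm]; simp
  · have hm' : 0 < mm B i j := lt_of_le_of_ne (mm_nonneg B i j) (Ne.symm hm)
    have hreal : Real.sqrt (mm B i j / 2) / Real.sqrt (2 * mm B i j) = 1 / 2 := by
      rw [← Real.sqrt_div (by linarith : (0:ℝ) ≤ mm B i j / 2)]
      rw [show mm B i j / 2 / (2 * mm B i j) = 1/4 by field_simp; ring]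
      rw [show (1/4 : ℝ) = (1/2)^2 by norm_num, Real.sqrt_sq (by norm_num)]
    have hc : ((Real.sqrt (mm B i j / 2) : ℝ) : ℂ) / ((Real.sqrt (2 * mm B i j) : ℝ) : ℂ)
        = 1 / 2 := by
      rw [← Complex.ofReal_div, hreal]
      norm_num
    rw [div_mul_eq_mul_div, mul_div_assoc, hc]
    ring

lemma sumB (hin : ∀ i j, ‖B i j‖ ^ 2 ≤ (A i j).re * (A j i).re)
    (h0a : ∀ i j, 0 ≤ (A i j).re) (hherm : B.IsHermitian)
    (hdd : ∀ i, ∑ j ∈ univ.filter (· ≠ i), ‖B i j‖ ≤ (B i i).re)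
    (k l : Fin d) :
    ∑ p : Fin d × Fin d × Bool, xx A B p k * star (xx A B p l) = B k l := by
  simp only [Fintype.sum_prod_type, Fintype.sum_bool, Finset.sum_add_distrib]
  have hT : ∑ i, ∑ j, xx A B (i,j,true) k * star (xx A B (i,j,true) l) = 0 := by
    refine Finset.sum_eq_zero fun i _ => Finset.sum_eq_zero fun j _ => ?_
    simp [xx]
  rw [hT, zero_add]
  by_cases hkl : k = l
  · subst hkl
    rw [sum_sum_diag (fun i j => xx A B (i,j,false) k * star (xx A B (i,j,false) k)) k ?h0]
    case h0 =>
      intro i j hi hj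
      by_cases hij : i = j
      · subst hij
        simp [xx, Ne.symm hi]
      · simp [xx, hij, Ne.symm hi, Ne.symm hj]
    have e1 : xx A B (k,k,false) k * star (xx A B (k,k,false) k) = ((dl B k : ℝ) : ℂ) := by
      have : xx A B (k,k,false) k = ((Real.sqrt (dl B k) : ℝ) : ℂ) := by simp [xx]
      rw [this, hsqc _ (dl_nonneg B hdd k)]
    have e2 : ∀ j ∈ univ.erase k,
        xx A B (k,j,false) k * star (xx A B (k,j,false) k) = ((mm B k j / 2 : ℝ) : ℂ) := by
      intro j hj
      have hjk : ¬k = j := fun h => (Finset.ne_of_mem_erase hj) h.symm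
      have : xx A B (k,j,false) k = B k j / ((Real.sqrt (2 * mm B k j) : ℝ) : ℂ) := by
        simp [xx, hjk]
      rw [this, key1 B k j]
    have e3 : ∀ i ∈ univ.erase k,
        xx A B (i,k,false) k * star (xx A B (i,k,false) k) = ((mm B k i / 2 : ℝ) : ℂ) := by
      intro i hi
      have hik : ¬k = i := fun h => (Finset.ne_of_mem_erase hi) h.symm
      have hik2 : ¬ i = k := fun h => hik h.symm
      have : xx A B (i,k,false) k = ((Real.sqrt (mm B i k / 2) : ℝ) : ℂ) := by
        simp [xx, hik, hik2]
      rw [this, hsqc _ (div_nonneg (mm_nonneg B i k) (by norm_num)), mm_symm B hherm i k]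
    rw [e1, Finset.sum_congr rfl e2, Finset.sum_congr rfl e3]
    rw [← Complex.ofReal_sum, ← Complex.ofReal_add, ← Complex.ofReal_add]
    have hre : (dl B k + ∑ j ∈ univ.erase k, mm B k j / 2) + ∑ j ∈ univ.erase k, mm B k j / 2
        = (B k k).re := by
      have hcomb : ∑ j ∈ univ.erase k, mm B k j / 2 + ∑ j ∈ univ.erase k, mm B k j / 2
          = ∑ j ∈ univ.erase k, mm B k j := by
        rw [← Finset.sum_add_distrib]
        exact Finset.sum_congr rfl fun _ _ => by ring
      have hdl : dl B k = (B k k).re - ∑ j ∈ univ.erase k, mm B k j := rfl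
      rw [add_assoc, hcomb, hdl]
      ring
    rw [hre]
    exact Complex.conj_eq_iff_re.mp (hherm.apply k k)
  · rw [sum_sum_two (fun i j => xx A B (i,j,false) k * star (xx A B (i,j,false) l)) k l hkl ?h0]
    case h0 =>
      intro i j h1 h2
      by_cases hij : i = j
      · subst hij
        by_cases hk : k = i
        · subst hk
          have hlk : ¬ l = k := fun h => hkl h.symm
          simp [xx, hkl, hlk]
        · simp [xx, hk]
      · by_cases hki : k = i
        · have hlj : ¬ l = j := fun h => h1 ⟨hki.symm, h.symm⟩
          have hli : ¬ l = i := fun h => hkl (hki.trans h.symm)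
          simp [xx, hij, hlj, hli]
        · by_cases hkj : k = j
          · have hli : ¬ l = i := fun h => h2 ⟨h.symm, hkj.symm⟩
            have hlj : ¬ l = j := fun h => hkl (hkj.trans h.symm)
            simp [xx, hij, hli, hlj]
          · simp [xx, hij, hki, hkj]
    have g1 : xx A B (k,l,false) k * star (xx A B (k,l,false) l) = B k l / 2 := by
      have hlk : ¬ l = k := fun h => hkl h.symm
      have ek : xx A B (k,l,false) k = B k l / ((Real.sqrt (2 * mm B k l) : ℝ) : ℂ) := by
        simp [xx, hkl]
      have el : xx A B (k,l,false) l = ((Real.sqrt (mm B k l / 2) : ℝ) : ℂ) := by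
        simp [xx, hkl, hlk]
      rw [ek, el, Complex.star_def, Complex.conj_ofReal, key4 B k l]
    have g2 : xx A B (l,k,false) k * star (xx A B (l,k,false) l) = B k l / 2 := by
      have hlk : ¬ l = k := fun h => hkl h.symm
      have ek : xx A B (l,k,false) k = ((Real.sqrt (mm B l k / 2) : ℝ) : ℂ) := by
        simp [xx, hlk, hkl]
      have el : xx A B (l,k,false) l = B l k / ((Real.sqrt (2 * mm B l k) : ℝ) : ℂ) := by
        simp [xx, hlk]
      rw [ek, el, Complex.star_def, map_div₀, Complex.conj_ofReal]
      rw [show (starRingEnd ℂ) (B l k) = B k l from hherm.apply k l]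
      rw [mm_symm B hherm l k, mul_comm, key4 B k l]
    rw [g1, g2]
    ring

lemma supp (hin : ∀ i j, ‖B i j‖ ^ 2 ≤ (A i j).re * (A j i).re)
    (h0a : ∀ i j, 0 ≤ (A i j).re) (p : Fin d × Fin d × Bool) :
    (univ.filter (fun i => V A B p i * W A B p i ≠ 0)).card ≤ 2 := by
  have hsub : univ.filter (fun i => V A B p i * W A B p i ≠ 0) ⊆ {p.1, p.2.1} := by
    intro i hi
    rw [Finset.mem_filter] at hi
    have hx : xx A B p i ≠ 0 := by rw [← VW_eq_xx A B hin h0a p i]; exact hi.2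
    by_contra hmem
    simp only [Finset.mem_insert, Finset.mem_singleton] at hmem
    push_neg at hmem
    obtain ⟨a, b, t⟩ := p
    simp only at hmem
    apply hx
    cases t
    · by_cases hab : a = b
      · subst hab
        simp [xx, hmem.1]
      · simp [xx, hab, hmem.1, hmem.2]
    · simp [xx]
  calc (univ.filter (fun i => V A B p i * W A B p i ≠ 0)).card
      ≤ ({p.1, p.2.1} : Finset (Fin d)).card := Finset.card_le_card hsub
    _ ≤ 2 := le_trans (Finset.card_insert_le _ _) (by simp)

end PCPFW2


open PCPFW2

/-- If `(A,B)` have equal diagonals, `A` has nonnegative entries, `B` is hermitian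
diagonally dominant, and `A_{ij}A_{ji} ≥ |B_{ij}|²` for all `i,j`, then `(A,B)` is pairwise
completely positive with factor width 2. -/
theorem pcp_factor_width_two_of_diagonally_dominant {d : ℕ}
    (A B : Matrix (Fin d) (Fin d) ℂ) (hdiag : ∀ i, A i i = B i i)
    (hA : ∀ i j, (A i j).im = 0 ∧ 0 ≤ (A i j).re)
    (hherm : B.IsHermitian)
    (hdd : ∀ i, ∑ j ∈ univ.filter (· ≠ i), ‖B i j‖ ≤ (B i i).re)
    (hineq : ∀ i j, ‖B i j‖ ^ 2 ≤ (A i j).re * (A j i).re) :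
    ∃ (N : ℕ) (v w : Fin N → Fin d → ℂ),
      (∀ n, (univ.filter (fun i => v n i * w n i ≠ 0)).card ≤ 2) ∧
      A = ∑ n, vecMulVec (fun i => v n i * star (v n i))
                (star fun j => w n j * star (w n j)) ∧
      B = ∑ n, vecMulVec (fun i => v n i * w n i)
                (star fun j => v n j * w n j) := by
  classical
  have h0a : ∀ i j, 0 ≤ (A i j).re := fun i j => (hA i j).2
  have hBkk : ∀ k, aa A k k = (B k k).re := fun k => congrArg Complex.re (hdiag k)
  let e := (Fintype.equivFin (Fin d × Fin d × Bool))
  refine ⟨Fintype.card (Fin d × Fin d × Bool), fun n => V A B (e.symm n),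
    fun n => W A B (e.symm n), fun n => supp A B hineq h0a (e.symm n), ?_, ?_⟩
  · ext k l
    rw [Matrix.sum_apply]
    have hterm : ∀ n, (vecMulVec (fun i => V A B (e.symm n) i * star (V A B (e.symm n) i))
        (star fun j => W A B (e.symm n) j * star (W A B (e.symm n) j))) k l
        = ((nv A B (e.symm n) k * nw A B (e.symm n) l : ℝ) : ℂ) := by
      intro n
      rw [vecMulVec_apply]
      simp only [Pi.star_apply]
      rw [W_mul_star A B h0a, V_mul_star A B hineq h0a hdd,
        Complex.star_def, Complex.conj_ofReal, ← Complex.ofReal_mul]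
    rw [Finset.sum_congr rfl (fun n _ => hterm n), ← Complex.ofReal_sum,
      Equiv.sum_comp e.symm (fun p => nv A B p k * nw A B p l),
      sumA A B hineq h0a hherm hBkk k l]
    refine Complex.ext ?_ ?_
    · simp [aa]
    · simp [(hA k l).1]
  · ext k l
    rw [Matrix.sum_apply]
    have hterm : ∀ n, (vecMulVec (fun i => V A B (e.symm n) i * W A B (e.symm n) i)
        (star fun j => V A B (e.symm n) j * W A B (e.symm n) j)) k l
        = xx A B (e.symm n) k * star (xx A B (e.symm n) l) := by
      intro n
      rw [vecMulVec_apply]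
      simp only [Pi.star_apply]
      rw [VW_eq_xx A B hineq h0a, VW_eq_xx A B hineq h0a]
    rw [Finset.sum_congr rfl (fun n _ => hterm n),
      Equiv.sum_comp e.symm (fun p => xx A B p k * star (xx A B p l)),
      sumB A B hineq h0a hherm hdd k l]
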